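/- For every a ∈ (1/√2, 1) and every r ∈ [0,1), the identity ((r-a)/(1-ar))^2 + 2(1-a^2)·Σ_{k=1}^∞ a^{k-2}((k+1)a^2 - (k-1))·r^k = 1 - (1-a^2)((1+2a^2)r^2 - 4ar + 1)/(1-ar)^2 holds; equivalently, the left-hand side equals 1 - (1-a^2)(1+2a^2)(r - α_+)(r - α_-)/(1-ar)^2, where α_± = 1/(2a ± √(2a^2-1)). Consequently, the left-hand side is ≤ 1 if and only if r ≤ α_+ or α_- ≤ r < 1. -/

import Mathlib

set_option maxHeartbeats 1000000


/-- The identity behind the sharpness of `1/3` in Corollary 2(b): for `a ∈ (1/√2, 1)`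
and `r ∈ [0,1)`, with `S = ((r-a)/(1-ar))^2 + 2(1-a^2) Σ_{k≥1} a^{k-2}((k+1)a^2-(k-1)) r^k`
(the series written with index `k = j+1`), one has
`S = 1 - (1-a^2)((1+2a^2)r^2 - 4ar + 1)/(1-ar)^2`
`  = 1 - (1-a^2)(1+2a^2)(r-α₊)(r-α₋)/(1-ar)^2`, where `α± = 1/(2a ± √(2a^2-1))`,
and consequently `S ≤ 1 ↔ r ≤ α₊ ∨ α₋ ≤ r`. -/
theorem statement10 (a r : ℝ) (ha0 : 1 / Real.sqrt 2 < a) (ha1 : a < 1)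
    (hr0 : 0 ≤ r) (hr1 : r < 1)
    (S αp αm : ℝ)
    (hS : S = ((r - a) / (1 - a * r)) ^ 2 +
      2 * (1 - a ^ 2) *
        ∑' j : ℕ, a ^ ((j : ℤ) - 1) * (((j : ℝ) + 2) * a ^ 2 - (j : ℝ)) * r ^ (j + 1))
    (hαp : αp = 1 / (2 * a + Real.sqrt (2 * a ^ 2 - 1)))
    (hαm : αm = 1 / (2 * a - Real.sqrt (2 * a ^ 2 - 1))) :
    S = 1 - (1 - a ^ 2) * ((1 + 2 * a ^ 2) * r ^ 2 - 4 * a * r + 1) / (1 - a * r) ^ 2 ∧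
    S = 1 - (1 - a ^ 2) * (1 + 2 * a ^ 2) * (r - αp) * (r - αm) / (1 - a * r) ^ 2 ∧
    (S ≤ 1 ↔ r ≤ αp ∨ αm ≤ r) := by
  have hs2 : (0:ℝ) < Real.sqrt 2 := Real.sqrt_pos.mpr (by norm_num)
  have ha : 0 < a := lt_trans (by positivity) ha0
  have ha2 : 1 / 2 < a ^ 2 := by
    have h2 : Real.sqrt 2 ^ 2 = 2 := Real.sq_sqrt (by norm_num)
    have h3 : (1 / Real.sqrt 2) ^ 2 < a ^ 2 := by
      apply pow_lt_pow_left₀ ha0 (by positivity)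
      norm_num
    rw [div_pow, one_pow, h2] at h3
    linarith
  set s := Real.sqrt (2 * a ^ 2 - 1) with hsdef
  have hs0 : 0 < s := Real.sqrt_pos.mpr (by nlinarith)
  have hssq : s ^ 2 = 2 * a ^ 2 - 1 := Real.sq_sqrt (by nlinarith)
  have hs2a : s < 2 * a := by nlinarith
  have hx : |a * r| < 1 := by
    rw [abs_of_nonneg (by positivity)]
    nlinarith
  have hx' : ‖a * r‖ < 1 := by rwa [Real.norm_eq_abs]
  have hden : 0 < 1 - a * r := by nlinarith [abs_of_nonneg (mul_nonneg ha.le hr0) ▸ hx]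
  -- sum computation
  have H1 := hasSum_coe_mul_geometric_of_norm_lt_one (𝕜 := ℝ) hx'
  have H2 := hasSum_geometric_of_norm_lt_one hx'
  have Hsum : HasSum (fun j : ℕ => a ^ ((j : ℤ) - 1) * (((j : ℝ) + 2) * a ^ 2 - (j : ℝ)) * r ^ (j + 1))
      (r * (a ^ 2 - 1) / a * ((a * r) / (1 - a * r) ^ 2) + 2 * a * r * (1 - a * r)⁻¹) := by
    have := (H1.mul_left (r * (a ^ 2 - 1) / a)).add (H2.mul_left (2 * a * r))
    convert this using 2 with j
    swap
    have hz : a ^ ((j : ℤ) - 1) = a ^ j / a := by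
      rw [zpow_sub₀ (ne_of_gt ha), zpow_natCast, zpow_one, div_eq_mul_inv, ← div_eq_mul_inv]
    rw [hz]
    rw [pow_succ, mul_pow]
    field_simp
    ring
    rfl
  have htsum : (∑' j : ℕ, a ^ ((j : ℤ) - 1) * (((j : ℝ) + 2) * a ^ 2 - (j : ℝ)) * r ^ (j + 1))
      = r * (a ^ 2 - 1) / a * ((a * r) / (1 - a * r) ^ 2) + 2 * a * r * (1 - a * r)⁻¹ :=
    Hsum.tsum_eq
  have hS1 : S = 1 - (1 - a ^ 2) * ((1 + 2 * a ^ 2) * r ^ 2 - 4 * a * r + 1) / (1 - a * r) ^ 2 := by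
    rw [hS, htsum]
    have hne : 1 - r * a ≠ 0 := by rw [mul_comm]; exact hden.ne'
    field_simp
    ring
  have hkey : (1 + 2 * a ^ 2) * (r - αp) * (r - αm) = (1 + 2 * a ^ 2) * r ^ 2 - 4 * a * r + 1 := by
    rw [hαp, hαm]
    have h1 : 2 * a + s ≠ 0 := by positivity
    have h2 : 2 * a - s ≠ 0 := ne_of_gt (by linarith)
    field_simp
    ring_nf
    nlinarith [hssq, sq_nonneg s, sq_nonneg (r*s), sq_nonneg a]
  have hS2 : S = 1 - (1 - a ^ 2) * (1 + 2 * a ^ 2) * (r - αp) * (r - αm) / (1 - a * r) ^ 2 := by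
    rw [hS1]
    rw [show (1 - a ^ 2) * ((1 + 2 * a ^ 2) * r ^ 2 - 4 * a * r + 1) =
      (1 - a ^ 2) * (1 + 2 * a ^ 2) * (r - αp) * (r - αm) from by
        linear_combination (a ^ 2 - 1) * hkey]
  refine ⟨hS1, hS2, ?_⟩
  clear hS htsum Hsum H1 H2 hx hx' hkey hS1
  have hαpm : αp < αm := by
    rw [hαp, hαm]
    have hb : (0:ℝ) < 2 * a - s := by linarith
    have hc : 2 * a - s < 2 * a + s := by linarith
    exact div_lt_div_of_pos_left one_pos hb hc
  have h1a : 0 < 1 - a ^ 2 := by nlinarith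
  have hC : 0 < (1 - a ^ 2) * (1 + 2 * a ^ 2) := by positivity
  rw [hS2]
  constructor
  · intro h
    have hprod : 0 ≤ (r - αp) * (r - αm) := by
      by_contra hneg
      push_neg at hneg
      have : (1 - a ^ 2) * (1 + 2 * a ^ 2) * (r - αp) * (r - αm) / (1 - a * r) ^ 2 < 0 := by
        apply div_neg_of_neg_of_pos _ (by positivity)
        nlinarith
      linarith
    rcases mul_nonneg_iff.mp hprod with ⟨h1, h2⟩ | ⟨h1, h2⟩
    · right; linarith
    · left; linarith
  · intro h
    have hprod : 0 ≤ (r - αp) * (r - αm) := by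
      rcases h with h | h
      · nlinarith
      · apply mul_nonneg <;> linarith
    have : 0 ≤ (1 - a ^ 2) * (1 + 2 * a ^ 2) * (r - αp) * (r - αm) / (1 - a * r) ^ 2 := by
      apply div_nonneg _ (by positivity)
      nlinarith
    linarith
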